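/- Every finite simplicial complex Z is homotopy equivalent to a finite simplicial complex Y with no free faces such that π₁(Y) ≅ π₁(Z) * F_N for some N ≥ 0, where F_N is the free group on N generators. (Homotopy-theoretic content of Proposition 4.) -/

import Mathlib

open Geometry Finset Set ContinuousMap unitInterval



/-- key coordinate lemma -/
lemma coords_key {E : Type*} [AddCommGroup E] [Module ℝ E] {bset : Set E}
    (B : AffineBasis ↥bset ℝ E) (hB : ∀ i : ↥bset, (B i : E) = ↑i)
    (cf : E → E → ℝ) (hcf : ∀ (x y : E) (h : y ∈ bset), cf x y = B.coord ⟨y, h⟩ x)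
    (hcf0 : ∀ x y, y ∉ bset → cf x y = 0)
    (u : Finset E) (hu : ∀ y ∈ u, y ∈ bset) {x : E}
    (hx : x ∈ convexHull ℝ (u : Set E)) :
    (∀ y : E, 0 ≤ cf x y) ∧ (∀ y : E, y ∉ u → cf x y = 0) ∧
      (∑ y ∈ u, cf x y) = 1 ∧ (∑ y ∈ u, cf x y • y) = x := by
  classical
  obtain ⟨w, hw0, hw1, hwx⟩ := Finset.mem_convexHull'.mp hx
  set uB : Finset ↥bset := u.attach.image (fun y => (⟨y.1, hu _ y.2⟩ : ↥bset)) with huB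
  have hmem : ∀ j : ↥bset, j ∈ uB ↔ (j : E) ∈ u := by
    intro j
    constructor
    · rintro hj
      simp only [huB, Finset.mem_image, Finset.mem_attach] at hj
      obtain ⟨y, -, rfl⟩ := hj
      exact y.2
    · intro hj
      simp only [huB, Finset.mem_image]
      exact ⟨⟨j, hj⟩, Finset.mem_attach _ _, rfl⟩
  have hinj : ∀ a ∈ u.attach, ∀ b ∈ u.attach,
      (⟨a.1, hu _ a.2⟩ : ↥bset) = ⟨b.1, hu _ b.2⟩ → a = b := by
    intro a _ b _ h
    exact Subtype.ext (show a.1 = b.1 from congrArg (Subtype.val : ↥bset → E) h)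
  have hsum_uB : ∀ (g : E → ℝ), (∑ j ∈ uB, g ↑j) = ∑ y ∈ u, g y := by
    intro g
    rw [huB, Finset.sum_image hinj]
    exact Finset.sum_attach _ _
  have hsum_uBE : ∀ (g : E → E), (∑ j ∈ uB, g ↑j) = ∑ y ∈ u, g y := by
    intro g
    rw [huB, Finset.sum_image hinj]
    exact Finset.sum_attach _ _
  have hw'1 : (∑ j ∈ uB, (if (j : E) ∈ u then w ↑j else 0)) = 1 := by
    calc (∑ j ∈ uB, (if (j : E) ∈ u then w ↑j else 0)) = ∑ j ∈ uB, w ↑j :=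
          Finset.sum_congr rfl (fun j hj => if_pos ((hmem j).1 hj))
      _ = ∑ y ∈ u, w y := hsum_uB w
      _ = 1 := hw1
  have hcomb : uB.affineCombination ℝ (B : ↥bset → E)
      (fun j => if (j : E) ∈ u then w ↑j else 0) = x := by
    rw [Finset.affineCombination_eq_linear_combination _ _ _ hw'1]
    calc (∑ j ∈ uB, (if (j : E) ∈ u then w ↑j else 0) • (B j : E))
        = ∑ j ∈ uB, w ↑j • (↑j : E) :=
          Finset.sum_congr rfl (fun j hj => by rw [hB j, if_pos ((hmem j).1 hj)])
      _ = ∑ y ∈ u, w y • y := hsum_uBE (fun y => w y • y)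
      _ = x := hwx
  have hcoord : ∀ j : ↥bset, B.coord j x = if (j : E) ∈ u then w ↑j else 0 := by
    intro j
    by_cases hj : j ∈ uB
    · rw [← hcomb, B.coord_apply_combination_of_mem hj hw'1]
    · rw [← hcomb, B.coord_apply_combination_of_notMem hj hw'1,
        if_neg (fun h => hj ((hmem j).2 h))]
  have hcf_eq : ∀ y : E, cf x y = if y ∈ u then w y else 0 := by
    intro y
    by_cases hyb : y ∈ bset
    · rw [hcf x y hyb, hcoord ⟨y, hyb⟩]
    · rw [hcf0 x y hyb, if_neg (fun hyu => hyb (hu _ hyu))]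
  refine ⟨?_, ?_, ?_, ?_⟩
  · intro y
    rw [hcf_eq]
    split
    · exact hw0 _ ‹_›
    · rfl
  · intro y hy
    rw [hcf_eq, if_neg hy]
  · calc (∑ y ∈ u, cf x y) = ∑ y ∈ u, w y :=
        Finset.sum_congr rfl (fun y hy => by rw [hcf_eq, if_pos hy])
      _ = 1 := hw1
  · calc (∑ y ∈ u, cf x y • y) = ∑ y ∈ u, w y • y :=
        Finset.sum_congr rfl (fun y hy => by rw [hcf_eq, if_pos hy])
      _ = x := hwx



/-- `s` is a free face of the simplicial complex `K`: it is a face of exactly one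
simplex of one dimension higher. -/
def IsFreeFace {m : ℕ} (K : Geometry.SimplicialComplex ℝ (Fin m → ℝ))
    (s : Finset (Fin m → ℝ)) : Prop :=
  s ∈ K.faces ∧ ∃! t, t ∈ K.faces ∧ s ⊆ t ∧ t.card = s.card + 1



set_option maxHeartbeats 2000000 in
theorem collapse_step {m : ℕ} (Z : Geometry.SimplicialComplex ℝ (Fin m → ℝ))
    (hfin : Z.faces.Finite) {s : Finset (Fin m → ℝ)} (hfree : IsFreeFace Z s) :
    ∃ Z' : Geometry.SimplicialComplex ℝ (Fin m → ℝ), Z'.faces ⊆ Z.faces ∧ s ∉ Z'.faces ∧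
      Nonempty (ContinuousMap.HomotopyEquiv ↥Z.space ↥Z'.space) := by
  classical
  obtain ⟨hsZ, t, ⟨htZ, hst, hcard⟩, huni⟩ := hfree
  have hsne : s.Nonempty :=
    Finset.nonempty_iff_ne_empty.2 (by rintro rfl; exact Z.empty_notMem hsZ)
  have hsnet : s ≠ t := by intro h; rw [h] at hcard; omega
  obtain ⟨v, hvs, htv⟩ : ∃ v, v ∉ s ∧ t = insert v s := by
    have h1 : (t \ s).card = 1 := by rw [Finset.card_sdiff_of_subset hst]; omega
    obtain ⟨v, hv⟩ := Finset.card_eq_one.mp h1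
    have hvmem : v ∈ t \ s := hv ▸ Finset.mem_singleton_self v
    refine ⟨v, (Finset.mem_sdiff.mp hvmem).2, Finset.Subset.antisymm ?_ ?_⟩
    · intro y hy
      by_cases hys : y ∈ s
      · exact Finset.mem_insert_of_mem hys
      · have hyv : y ∈ t \ s := Finset.mem_sdiff.mpr ⟨hy, hys⟩
        rw [hv, Finset.mem_singleton] at hyv
        rw [hyv]; exact Finset.mem_insert_self _ _
    · exact Finset.insert_subset (Finset.mem_sdiff.mp hvmem).1 hst
  have hvt : v ∈ t := htv ▸ Finset.mem_insert_self v s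
  have hcof : ∀ u ∈ Z.faces, s ⊆ u → u = s ∨ u = t := by
    intro u hu hsu
    by_cases h : u = s
    · exact Or.inl h
    right
    have hut : u ⊆ t := by
      intro y hy
      by_cases hys : y ∈ s
      · exact hst hys
      · have h1 : insert y s ∈ Z.faces :=
          Z.down_closed hu (Finset.insert_subset hy hsu) (Finset.insert_nonempty _ _)
        have h2 : insert y s = t :=
          huni _ ⟨h1, Finset.subset_insert _ _,
            by rw [Finset.card_insert_of_notMem hys]⟩
        rw [← h2]; exact Finset.mem_insert_self _ _
    have hlt : s.card < u.card := Finset.card_lt_card (ssubset_of_subset_of_ne hsu (Ne.symm h))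
    exact Finset.eq_of_subset_of_card_le hut (by omega)
  -- the collapsed complex
  let Z' : Geometry.SimplicialComplex ℝ (Fin m → ℝ) :=
    { faces := Z.faces \ {s, t}
      indep := fun h => Z.indep h.1
      isRelLowerSet_faces := by
        intro u hu
        refine ⟨Z.nonempty_of_mem_faces hu.1, fun w hwu hwne => ?_⟩
        refine ⟨Z.down_closed hu.1 hwu hwne, ?_⟩
        intro hw
        rcases hw with hw | hw
        · subst hw
          rcases hcof u hu.1 hwu with h | h <;> [exact hu.2 (Or.inl h); exact hu.2 (Or.inr h)]
        · simp only [Set.mem_singleton_iff] at hw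
          subst hw
          rcases hcof u hu.1 (hst.trans hwu) with h | h <;>
            [exact hu.2 (Or.inl h); exact hu.2 (Or.inr h)]
      inter_subset_convexHull := fun hu hw => Z.inter_subset_convexHull hu.1 hw.1 }
  have hZ'sub : Z'.faces ⊆ Z.faces := Set.diff_subset
  have hsZ' : s ∉ Z'.faces := by simp [Z']
  refine ⟨Z', hZ'sub, hsZ', ?_⟩
  -- geometry setup
  have htind : AffineIndependent ℝ ((↑) : ((t : Set (Fin m → ℝ))) → (Fin m → ℝ)) := Z.indep htZ
  obtain ⟨bset, htb, hbind, hbtot⟩ := exists_subset_affineIndependent_affineSpan_eq_top htind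
  let B : AffineBasis ↥bset ℝ (Fin m → ℝ) := ⟨(↑), hbind, by rw [Subtype.range_coe]; exact hbtot⟩
  have hB : ∀ i : ↥bset, (B i : Fin m → ℝ) = ↑i := fun i => rfl
  let cf : (Fin m → ℝ) → (Fin m → ℝ) → ℝ :=
    fun x y => if h : y ∈ bset then B.coord ⟨y, h⟩ x else 0
  have hcf : ∀ (x y) (h : y ∈ bset), cf x y = B.coord ⟨y, h⟩ x := fun x y h => dif_pos h
  have hcf0 : ∀ x y, y ∉ bset → cf x y = 0 := fun x y h => dif_neg h
  have hcont_cf : ∀ y, Continuous (fun x => cf x y) := by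
    intro y
    by_cases h : y ∈ bset
    · simp only [cf, dif_pos h]
      exact continuous_barycentric_coord B ⟨y, h⟩
    · simp only [cf, dif_neg h]
      exact continuous_const
  have hu_t : ∀ y ∈ t, y ∈ bset := fun y hy => htb (Finset.mem_coe.mpr hy)
  set A : Set (Fin m → ℝ) := Z'.space with hA
  set C : Set (Fin m → ℝ) := convexHull ℝ (t : Set (Fin m → ℝ)) with hC
  set μ : (Fin m → ℝ) → ℝ := fun x => s.inf' hsne (cf x) with hμ
  have hμcont : Continuous μ := Continuous.finset_inf'_apply hsne (fun y _ => hcont_cf y)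
  set wv : Fin m → ℝ := (s.card : ℝ) • v - ∑ y ∈ s, y with hwv
  have hKt : ∀ {x}, x ∈ C → (∀ y, 0 ≤ cf x y) ∧ (∀ y, y ∉ t → cf x y = 0) ∧
      (∑ y ∈ t, cf x y) = 1 ∧ (∑ y ∈ t, cf x y • y) = x :=
    fun {x} hx => coords_key B hB cf hcf hcf0 t hu_t hx
  have hμ_nonneg : ∀ x ∈ C, 0 ≤ μ x := fun x hx =>
    Finset.le_inf' hsne _ (fun y _ => (hKt hx).1 y)
  have hμ_le : ∀ (x : Fin m → ℝ), ∀ y ∈ s, μ x ≤ cf x y := fun x y hy =>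
    Finset.inf'_le _ hy
  -- the deformation stays inside C
  have hwsum : ∀ (x : Fin m → ℝ) (ρ : ℝ),
      (∑ y ∈ t, (cf x y + (if y = v then (s.card : ℝ) * ρ else 0) - (if y ∈ s then ρ else 0)))
        = (∑ y ∈ t, cf x y) := by
    intro x ρ
    rw [Finset.sum_sub_distrib, Finset.sum_add_distrib, Finset.sum_ite_eq' t v
      (fun _ => (s.card : ℝ) * ρ), if_pos hvt]
    have h2 : (∑ y ∈ t, (if y ∈ s then ρ else 0)) = (s.card : ℝ) * ρ := by
      rw [Finset.sum_ite_mem, Finset.inter_eq_right.mpr hst, Finset.sum_const, nsmul_eq_mul]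
    rw [h2]; ring
  have hwcomb : ∀ (x : Fin m → ℝ) (ρ : ℝ),
      (∑ y ∈ t, (cf x y + (if y = v then (s.card : ℝ) * ρ else 0) - (if y ∈ s then ρ else 0)) • y)
        = (∑ y ∈ t, cf x y • y) + ρ • wv := by
    intro x ρ
    have e1 : ∀ y ∈ t, (cf x y + (if y = v then (s.card : ℝ) * ρ else 0) -
        (if y ∈ s then ρ else 0)) • y
        = cf x y • y + (if y = v then ((s.card : ℝ) * ρ) • v else 0)
          - (if y ∈ s then ρ • y else 0) := by
      intro y hy
      rw [sub_smul, add_smul]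
      congr 1
      · congr 1
        split
        · rename_i h; rw [h]
        · rw [zero_smul]
      · split
        · rfl
        · rw [zero_smul]
    rw [Finset.sum_congr rfl e1, Finset.sum_sub_distrib, Finset.sum_add_distrib,
      Finset.sum_ite_eq' t v (fun _ => ((s.card : ℝ) * ρ) • v), if_pos hvt]
    have h2 : (∑ y ∈ t, (if y ∈ s then ρ • y else 0)) = ρ • (∑ y ∈ s, y) := by
      rw [Finset.sum_ite_mem, Finset.inter_eq_right.mpr hst, Finset.smul_sum]
    rw [h2, hwv]
    module
  have hPC : ∀ x ∈ C, ∀ ρ : ℝ, 0 ≤ ρ → ρ ≤ μ x → x + ρ • wv ∈ C := by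
    intro x hx ρ hρ0 hρμ
    obtain ⟨hpos, hzero, hsum1, hcomb⟩ := hKt hx
    rw [hC]
    apply Finset.mem_convexHull'.mpr
    refine ⟨fun y => cf x y + (if y = v then (s.card : ℝ) * ρ else 0) - (if y ∈ s then ρ else 0),
      ?_, ?_, ?_⟩
    · intro y hy
      dsimp only
      rw [htv, Finset.mem_insert] at hy
      rcases hy with hyv | hy
      · rw [if_pos hyv, if_neg (by simpa [hyv] using hvs)]
        have : (0:ℝ) ≤ (s.card : ℝ) * ρ := by positivity
        linarith [hpos y]
      · have hyv : y ≠ v := fun h => hvs (h ▸ hy)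
        rw [if_neg hyv, if_pos hy]
        have := hμ_le x y hy
        linarith
    · rw [hwsum x ρ, hsum1]
    · rw [hwcomb x ρ, hcomb]
  -- the retraction lands in A
  have hface_erase : ∀ u₀ ∈ s, t.erase u₀ ∈ Z'.faces := by
    intro u₀ hu₀
    have h1 : t.erase u₀ ∈ Z.faces := by
      apply Z.down_closed htZ (Finset.erase_subset _ _)
      exact ⟨v, Finset.mem_erase.mpr ⟨fun hv' => hvs (hv' ▸ hu₀), hvt⟩⟩
    refine ⟨h1, ?_⟩
    intro h
    rcases h with h | h
    · have : v ∈ t.erase u₀ := Finset.mem_erase.mpr ⟨fun hv' => hvs (hv' ▸ hu₀), hvt⟩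
      rw [h] at this
      exact hvs this
    · simp only [Set.mem_singleton_iff] at h
      have : u₀ ∈ t.erase u₀ := by rw [h]; exact hst hu₀
      exact Finset.notMem_erase _ _ this
  have hrA : ∀ x ∈ C, x + μ x • wv ∈ A := by
    intro x hx
    obtain ⟨hpos, hzero, hsum1, hcomb⟩ := hKt hx
    obtain ⟨u₀, hu₀s, hmin⟩ := Finset.exists_mem_eq_inf' hsne (cf x)
    have hu₀v : u₀ ≠ v := fun h => hvs (h ▸ hu₀s)
    have hminμ : μ x = cf x u₀ := hmin
    set wfun : (Fin m → ℝ) → ℝ := fun y => cf x y + (if y = v then (s.card : ℝ) * μ x else 0) -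
        (if y ∈ s then μ x else 0) with hwfun
    have hw0' : wfun u₀ = 0 := by
      rw [hwfun]
      dsimp only
      rw [if_neg hu₀v, if_pos hu₀s, add_zero, hminμ, sub_self]
    have herase : x + μ x • wv ∈ convexHull ℝ ((t.erase u₀ : Finset (Fin m → ℝ)) : Set (Fin m → ℝ)) := by
      apply Finset.mem_convexHull'.mpr
      refine ⟨wfun, ?_, ?_, ?_⟩
      · intro y hy
        have hyt : y ∈ t := Finset.mem_of_mem_erase hy
        rw [htv, Finset.mem_insert] at hyt
        rw [hwfun]
        dsimp only
        rcases hyt with hyv | hys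
        · rw [if_pos hyv, if_neg (by simpa [hyv] using hvs)]
          have h0 : (0:ℝ) ≤ (s.card : ℝ) * μ x := by
            have := hμ_nonneg x hx; positivity
          linarith [hpos y]
        · have hyv : y ≠ v := fun h => hvs (h ▸ hys)
          rw [if_neg hyv, if_pos hys]
          have := hμ_le x y hys
          linarith
      · have htot : (∑ y ∈ t, wfun y) = 1 := by
          rw [hwfun]
          dsimp only
          rw [hwsum x (μ x), hsum1]
        have hsplit := Finset.add_sum_erase t wfun (hst hu₀s)
        rw [hw0', zero_add] at hsplit
        rw [hsplit, htot]
      · have htot : (∑ y ∈ t, wfun y • y) = x + μ x • wv := by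
          rw [hwfun]
          dsimp only
          rw [hwcomb x (μ x), hcomb]
        have hsplit := Finset.add_sum_erase t (fun y => wfun y • y) (hst hu₀s)
        rw [hw0', zero_smul, zero_add] at hsplit
        rw [hsplit, htot]
    exact Geometry.SimplicialComplex.convexHull_subset_space (hface_erase u₀ hu₀s) herase
  -- on A ∩ C the function μ vanishes
  have hAC : ∀ x, x ∈ A → x ∈ C → μ x = 0 := by
    intro x hxA hxC
    obtain ⟨u, huZ', hxu⟩ := Geometry.SimplicialComplex.mem_space_iff.mp hxA
    have hxut' : x ∈ convexHull ℝ ((u : Set (Fin m → ℝ)) ∩ (t : Set (Fin m → ℝ))) :=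
      Z.inter_subset_convexHull (hZ'sub huZ') htZ ⟨hxu, hxC⟩
    have hxut : x ∈ convexHull ℝ ((u ∩ t : Finset (Fin m → ℝ)) : Set (Fin m → ℝ)) := by
      rwa [Finset.coe_inter]
    by_contra hne
    have hpos : 0 < μ x := lt_of_le_of_ne (hμ_nonneg x hxC) (Ne.symm hne)
    have hsub : s ⊆ u := by
      intro y hy
      by_contra hyn
      have h0 := (coords_key B hB cf hcf hcf0 (u ∩ t)
        (fun y hy => hu_t y (Finset.mem_of_mem_inter_right hy)) hxut).2.1 y
        (fun hmem => hyn (Finset.mem_of_mem_inter_left hmem))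
      have := hμ_le x y hy
      linarith
    rcases hcof u (hZ'sub huZ') hsub with h | h
    · exact huZ'.2 (Or.inl h)
    · exact huZ'.2 (Or.inr h)
  have hfix : ∀ x, x ∈ A → x ∈ C → x + μ x • wv = x := by
    intro x h1 h2
    rw [hAC x h1 h2, zero_smul, add_zero]
  -- space decomposition
  have hCsub : C ⊆ Z.space := Geometry.SimplicialComplex.convexHull_subset_space htZ
  have hAsub : A ⊆ Z.space := by
    intro x hx
    obtain ⟨u, hu, hxu⟩ := Geometry.SimplicialComplex.mem_space_iff.mp hx
    exact Geometry.SimplicialComplex.mem_space_iff.mpr ⟨u, hZ'sub hu, hxu⟩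
  have hspace : ∀ x ∈ Z.space, x ∈ A ∪ C := by
    intro x hx
    obtain ⟨u, hu, hxu⟩ := Geometry.SimplicialComplex.mem_space_iff.mp hx
    by_cases h : u ∈ Z'.faces
    · exact Or.inl (Geometry.SimplicialComplex.mem_space_iff.mpr ⟨u, h, hxu⟩)
    · right
      have hust : u = s ∨ u = t := by
        by_contra hcon
        push_neg at hcon
        exact h ⟨hu, fun hmem => by
          rcases hmem with h1 | h1
          · exact hcon.1 h1
          · exact hcon.2 h1⟩
      rcases hust with rfl | rfl
      · exact convexHull_mono (by exact_mod_cast hst) hxu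
      · exact hxu
  -- closedness
  have hCclosed : IsClosed C := t.finite_toSet.isClosed_convexHull (𝕜 := ℝ)
  have hAclosed : IsClosed A := by
    have hAeq : A = ⋃ u ∈ Z'.faces, convexHull ℝ ((u : Finset (Fin m → ℝ)) : Set (Fin m → ℝ)) := rfl
    rw [hAeq]
    exact Set.Finite.isClosed_biUnion (hfin.subset hZ'sub)
      (fun u _ => u.finite_toSet.isClosed_convexHull (𝕜 := ℝ))
  -- the retraction
  have hmemA : ∀ x : ↥Z.space,
      (if (x : Fin m → ℝ) ∈ C then (x : Fin m → ℝ) + μ x • wv else (x : Fin m → ℝ)) ∈ A := by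
    intro x
    by_cases h : (x : Fin m → ℝ) ∈ C
    · rw [if_pos h]; exact hrA _ h
    · rw [if_neg h]
      rcases hspace _ x.2 with hA' | hC'
      · exact hA'
      · exact absurd hC' h
  have hfrontier : ∀ x : ↥Z.space, x ∈ frontier {y : ↥Z.space | (y : Fin m → ℝ) ∈ C} →
      (x : Fin m → ℝ) ∈ A ∧ (x : Fin m → ℝ) ∈ C := by
    intro x hx
    rw [frontier_eq_closure_inter_closure] at hx
    have hclosedS : IsClosed {y : ↥Z.space | (y : Fin m → ℝ) ∈ C} :=
      hCclosed.preimage continuous_subtype_val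
    have hclosedT : IsClosed {y : ↥Z.space | (y : Fin m → ℝ) ∈ A} :=
      hAclosed.preimage continuous_subtype_val
    have h2 : ({y : ↥Z.space | (y : Fin m → ℝ) ∈ C} : Set ↥Z.space)ᶜ ⊆
        {y : ↥Z.space | (y : Fin m → ℝ) ∈ A} := by
      intro y hy
      rcases hspace _ y.2 with h | h
      · exact h
      · exact absurd h hy
    refine ⟨?_, ?_⟩
    · exact (closure_minimal h2 hclosedT) hx.2
    · exact hclosedS.closure_subset hx.1
  let retr : C(↥Z.space, ↥Z'.space) :=
    { toFun := fun x =>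
        ⟨if (x : Fin m → ℝ) ∈ C then (x : Fin m → ℝ) + μ x • wv else (x : Fin m → ℝ), hmemA x⟩
      continuous_toFun := by
        apply Continuous.subtype_mk
        apply Continuous.if
        · intro a ha
          obtain ⟨h1, h2⟩ := hfrontier a ha
          exact hfix _ h1 h2
        · exact continuous_subtype_val.add
            ((hμcont.comp continuous_subtype_val).smul continuous_const)
        · exact continuous_subtype_val }
  let incl : C(↥Z'.space, ↥Z.space) :=
    { toFun := fun x => ⟨(x : Fin m → ℝ), hAsub x.2⟩
      continuous_toFun := continuous_subtype_val.subtype_mk _ }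
  -- the homotopy
  have hmemH : ∀ p : ↥unitInterval × ↥Z.space,
      (if ((p.2 : Fin m → ℝ)) ∈ C then (p.2 : Fin m → ℝ) + ((p.1 : ℝ) * μ p.2) • wv
        else (p.2 : Fin m → ℝ)) ∈ Z.space := by
    intro p
    by_cases h : ((p.2 : Fin m → ℝ)) ∈ C
    · rw [if_pos h]
      apply hCsub
      exact hPC _ h _ (mul_nonneg p.1.2.1 (hμ_nonneg _ h))
        (mul_le_of_le_one_left (hμ_nonneg _ h) p.1.2.2)
    · rw [if_neg h]; exact p.2.2
  let H : ContinuousMap.Homotopy (ContinuousMap.id ↥Z.space) (incl.comp retr) :=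
    { toFun := fun p =>
        ⟨if ((p.2 : Fin m → ℝ)) ∈ C then (p.2 : Fin m → ℝ) + ((p.1 : ℝ) * μ p.2) • wv
          else (p.2 : Fin m → ℝ), hmemH p⟩
      continuous_toFun := by
        apply Continuous.subtype_mk
        apply Continuous.if
        · intro a ha
          have hsub2 : frontier {p : ↥unitInterval × ↥Z.space | ((p.2 : Fin m → ℝ)) ∈ C} ⊆
              Prod.snd ⁻¹' (frontier {y : ↥Z.space | (y : Fin m → ℝ) ∈ C}) := by
            rw [frontier_eq_closure_inter_closure, frontier_eq_closure_inter_closure]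
            intro p hp
            have e1 : closure {p : ↥unitInterval × ↥Z.space | ((p.2 : Fin m → ℝ)) ∈ C} ⊆
                Prod.snd ⁻¹' closure {y : ↥Z.space | (y : Fin m → ℝ) ∈ C} :=
              closure_minimal (fun q hq => subset_closure hq)
                (isClosed_closure.preimage continuous_snd)
            have e2 : closure ({p : ↥unitInterval × ↥Z.space | ((p.2 : Fin m → ℝ)) ∈ C}ᶜ) ⊆
                Prod.snd ⁻¹' closure ({y : ↥Z.space | (y : Fin m → ℝ) ∈ C}ᶜ) :=
              closure_minimal (fun q hq => subset_closure hq)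
                (isClosed_closure.preimage continuous_snd)
            exact ⟨e1 hp.1, e2 hp.2⟩
          obtain ⟨h1, h2⟩ := hfrontier a.2 (hsub2 ha)
          have h0 : μ (a.2 : Fin m → ℝ) = 0 := hAC _ h1 h2
          rw [h0, mul_zero, zero_smul, add_zero]
        · refine continuous_subtype_val.comp continuous_snd |>.add ?_
          refine Continuous.smul (f := fun a : ↥unitInterval × ↥Z.space => (a.1 : ℝ) * μ a.2)
            (g := fun _ => wv) ?_ continuous_const
          exact ((continuous_subtype_val.comp continuous_fst).mul
            (hμcont.comp (continuous_subtype_val.comp continuous_snd)))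
        · exact continuous_subtype_val.comp continuous_snd
      map_zero_left := by
        intro x
        apply Subtype.ext
        show (if ((x : Fin m → ℝ)) ∈ C then (x : Fin m → ℝ) + (((0 : ↥unitInterval) : ℝ) * μ x) • wv
          else (x : Fin m → ℝ)) = (x : Fin m → ℝ)
        split <;> simp
      map_one_left := by
        intro x
        apply Subtype.ext
        show (if ((x : Fin m → ℝ)) ∈ C then (x : Fin m → ℝ) + (((1 : ↥unitInterval) : ℝ) * μ x) • wv
          else (x : Fin m → ℝ))
          = ((incl.comp retr) x : Fin m → ℝ)
        show _ = (if (x : Fin m → ℝ) ∈ C then (x : Fin m → ℝ) + μ x • wv else (x : Fin m → ℝ))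
        simp }
  have hretrincl : retr.comp incl = ContinuousMap.id ↥Z'.space := by
    apply ContinuousMap.ext
    intro x
    apply Subtype.ext
    show (if ((x : Fin m → ℝ)) ∈ C then (x : Fin m → ℝ) + μ x • wv else (x : Fin m → ℝ))
      = (x : Fin m → ℝ)
    by_cases h : ((x : Fin m → ℝ)) ∈ C
    · rw [if_pos h]; exact hfix _ x.2 h
    · rw [if_neg h]
  refine ⟨⟨retr, incl, ⟨H.symm⟩, ?_⟩⟩
  rw [hretrincl]


open CategoryTheory in
noncomputable def pi1EquivOfHomotopyEquiv {X Y : Type} [TopologicalSpace X] [TopologicalSpace Y]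
    (e : ContinuousMap.HomotopyEquiv X Y) (x : X) :
    Σ' y : Y, FundamentalGroup X x ≃* FundamentalGroup Y y := by
  let e' : TopCat.of X ≃ₕ TopCat.of Y := e
  let F := (FundamentalGroupoidFunctor.equivOfHomotopyEquiv e')
  refine ⟨(F.functor.obj ⟨x⟩).as, ?_⟩
  exact F.fullyFaithfulFunctor.mulEquivEnd ⟨x⟩

noncomputable def coprodTrivial (G : Type*) [Group G] :
    G ≃* Monoid.Coprod G (FreeGroup (Fin 0)) :=
  ((MulEquiv.coprodPUnit (M := G)).symm.trans
    (MulEquiv.coprodCongr (MulEquiv.refl G)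
      (MulEquiv.ofUnique (M := PUnit.{1}) (N := FreeGroup (Fin 0)))))

/-- Proposition 4 (homotopy-theoretic content): every finite simplicial complex
`Z` is homotopy equivalent to a finite simplicial complex `Y` with no free faces
such that `π₁(Y) ≅ π₁(Z) ∗ F_N` for some `N ≥ 0`. -/
theorem exists_no_free_face_complex {m : ℕ}
    (Z : Geometry.SimplicialComplex ℝ (Fin m → ℝ))
    (hfin : Z.faces.Finite) (z : Z.space) :
    ∃ (m' : ℕ) (Y : Geometry.SimplicialComplex ℝ (Fin m' → ℝ)),
      Y.faces.Finite ∧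
      (∀ s, ¬ IsFreeFace Y s) ∧
      Nonempty (ContinuousMap.HomotopyEquiv Z.space Y.space) ∧
      ∃ (N : ℕ) (y : Y.space),
        Nonempty (FundamentalGroup Y.space y ≃*
          Monoid.Coprod (FundamentalGroup Z.space z) (FreeGroup (Fin N))) := by
  classical
  suffices H : ∀ (n : ℕ) (Z : Geometry.SimplicialComplex ℝ (Fin m → ℝ))
      (hfin : Z.faces.Finite), hfin.toFinset.card ≤ n → ∀ z : ↥Z.space,
      ∃ (m' : ℕ) (Y : Geometry.SimplicialComplex ℝ (Fin m' → ℝ)),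
      Y.faces.Finite ∧
      (∀ s, ¬ IsFreeFace Y s) ∧
      Nonempty (ContinuousMap.HomotopyEquiv Z.space Y.space) ∧
      ∃ (N : ℕ) (y : Y.space),
        Nonempty (FundamentalGroup Y.space y ≃*
          Monoid.Coprod (FundamentalGroup Z.space z) (FreeGroup (Fin N))) by
    exact H hfin.toFinset.card Z hfin le_rfl z
  intro n
  induction n with
  | zero =>
    intro Z hfin hcard z
    exfalso
    have hempty : Z.faces = ∅ := by
      have := Finset.card_eq_zero.mp (Nat.le_zero.mp hcard)
      rwa [Set.Finite.toFinset_eq_empty] at this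
    obtain ⟨u, hu, -⟩ := Geometry.SimplicialComplex.mem_space_iff.mp z.2
    rw [hempty] at hu
    exact hu
  | succ n ih =>
    intro Z hfin hcard z
    by_cases hfree : ∃ s, IsFreeFace Z s
    · obtain ⟨s, hs⟩ := hfree
      obtain ⟨Z', hsub, hsnot, ⟨e⟩⟩ := collapse_step Z hfin hs
      have hfin' : Z'.faces.Finite := hfin.subset hsub
      have hlt : hfin'.toFinset.card ≤ n := by
        have hss : hfin'.toFinset ⊂ hfin.toFinset := by
          rw [Finset.ssubset_iff_of_subset (Set.Finite.toFinset_subset_toFinset.mpr hsub)]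
          exact ⟨s, by simpa using hs.1, by simpa using hsnot⟩
        have := Finset.card_lt_card hss
        omega
      obtain ⟨z', iso⟩ := pi1EquivOfHomotopyEquiv e z
      obtain ⟨m', Y, hYfin, hYfree, ⟨eY⟩, N, y, ⟨isoY⟩⟩ := ih Z' hfin' hlt z'
      exact ⟨m', Y, hYfin, hYfree, ⟨e.trans eY⟩, N, y,
        ⟨isoY.trans (MulEquiv.coprodCongr iso.symm (MulEquiv.refl _))⟩⟩
    · push_neg at hfree
      exact ⟨m, Z, hfin, hfree, ⟨ContinuousMap.HomotopyEquiv.refl _⟩, 0, z,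
        ⟨coprodTrivial _⟩⟩
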